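/- arXiv:2310.01070 — 2 statements merged into one kernel-verified Lean document; each statement's English description precedes it below -/
import Mathlib

section
/- Fix n ≥ 1, s ∈ (0,1), y > 0 and x ∈ ℝⁿ. Then ∫₀^∞ (1/(t·Γ(s))) · (y²/(2t))^s · e^{-y²/(2t)} · (2πt)^{-n/2} · e^{-|x|²/(2t)} dt = (Γ(s + n/2)/(π^{n/2} Γ(s))) · y^{2s}/(|x|² + y²)^{n/2 + s}. That is, integrating the n-dimensional Gaussian heat kernel of variance t against the hitting-time density (1/(t·Γ(s)))(y²/(2t))^s e^{-y²/(2t)} yields the Poisson-type kernel. -/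
open MeasureTheory Real Set

lemma aux_inv_gamma {a c : ℝ} (ha : 0 < a) (hc : 0 < c) :
    ∫ t in Set.Ioi (0:ℝ), t ^ (-a - 1) * Real.exp (-(c / t)) = Real.Gamma a / c ^ a := by
  have h := integral_comp_rpow_Ioi (fun u => u ^ (a - 1) * Real.exp (-(c * u)))
    (p := -1) (by norm_num)
  rw [Real.integral_rpow_mul_exp_neg_mul_Ioi ha hc] at h
  rw [show Real.Gamma a / c ^ a = (1/c)^a * Real.Gamma a by
    rw [one_div, Real.inv_rpow hc.le]; ring, ← h]
  refine setIntegral_congr_fun measurableSet_Ioi (fun t ht => ?_)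
  have ht : (0:ℝ) < t := ht
  have h1 : t ^ (-1:ℝ) = t⁻¹ := Real.rpow_neg_one t
  rw [smul_eq_mul, h1]
  rw [Real.inv_rpow ht.le, ← Real.rpow_neg ht.le,
    show |(-1:ℝ)| = 1 by norm_num, one_mul, mul_comm c t⁻¹, ← div_eq_inv_mul,
    ← mul_assoc, ← Real.rpow_add ht]
  ring_nf

/-- Integrating the `n`-dimensional Gaussian heat kernel of variance `t`
against the hitting-time density `(1/(t·Γ(s)))(y²/(2t))^s e^{-y²/(2t)}` yields the
Poisson-type kernel. -/
theorem subordination_of_heat_kernel_eq_poisson_kernel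
    (n : ℕ) (hn : 1 ≤ n) (s : ℝ) (hs : s ∈ Set.Ioo (0 : ℝ) 1)
    (y : ℝ) (hy : 0 < y) (x : EuclideanSpace ℝ (Fin n)) :
    ∫ t in Set.Ioi (0 : ℝ),
        (1 / (t * Real.Gamma s)) * (y ^ 2 / (2 * t)) ^ s * Real.exp (-(y ^ 2 / (2 * t)))
          * (2 * Real.pi * t) ^ (-(n : ℝ) / 2) * Real.exp (-(‖x‖ ^ 2 / (2 * t)))
      = (Real.Gamma (s + n / 2) / (Real.pi ^ ((n : ℝ) / 2) * Real.Gamma s))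
          * y ^ (2 * s) / (‖x‖ ^ 2 + y ^ 2) ^ ((n : ℝ) / 2 + s) := by
  obtain ⟨hs0, hs1⟩ := hs
  set a : ℝ := (n : ℝ) / 2 + s with ha_def
  have ha : 0 < a := by positivity
  have hΓs : 0 < Real.Gamma s := Real.Gamma_pos_of_pos hs0
  set c : ℝ := (‖x‖ ^ 2 + y ^ 2) / 2 with hc_def
  have hc : 0 < c := by positivity
  set C : ℝ := (y ^ 2 / 2) ^ s * (2 * Real.pi) ^ (-(n : ℝ) / 2) / Real.Gamma s with hC_def
  have hstep : ∫ t in Set.Ioi (0 : ℝ),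
        (1 / (t * Real.Gamma s)) * (y ^ 2 / (2 * t)) ^ s * Real.exp (-(y ^ 2 / (2 * t)))
          * (2 * Real.pi * t) ^ (-(n : ℝ) / 2) * Real.exp (-(‖x‖ ^ 2 / (2 * t)))
      = C * (Real.Gamma a / c ^ a) := by
    rw [← aux_inv_gamma ha hc, ← integral_const_mul]
    refine setIntegral_congr_fun measurableSet_Ioi (fun t ht => ?_)
    have ht : (0:ℝ) < t := ht
    have e1 : (y ^ 2 / (2 * t)) ^ s = (y ^ 2 / 2) ^ s * t ^ (-s) := by
      rw [show y ^ 2 / (2 * t) = (y ^ 2 / 2) / t by ring,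
        Real.div_rpow (by positivity) ht.le, Real.rpow_neg ht.le, div_eq_mul_inv]
    have e2 : (2 * Real.pi * t) ^ (-(n : ℝ) / 2)
        = (2 * Real.pi) ^ (-(n : ℝ) / 2) * t ^ (-(n : ℝ) / 2) := by
      rw [Real.mul_rpow (by positivity) ht.le]
    have e3 : Real.exp (-(y ^ 2 / (2 * t))) * Real.exp (-(‖x‖ ^ 2 / (2 * t)))
        = Real.exp (-(c / t)) := by
      rw [← Real.exp_add]; congr 1; rw [hc_def]; field_simp; ring
    have e4 : t⁻¹ * t ^ (-s) * t ^ (-(n : ℝ) / 2) = t ^ (-a - 1) := by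
      rw [← Real.rpow_neg_one t, ← Real.rpow_add ht, ← Real.rpow_add ht]
      congr 1; rw [ha_def]; ring
    rw [e1, e2]
    calc 1 / (t * Real.Gamma s) * ((y ^ 2 / 2) ^ s * t ^ (-s)) * Real.exp (-(y ^ 2 / (2 * t)))
          * ((2 * Real.pi) ^ (-(n : ℝ) / 2) * t ^ (-(n : ℝ) / 2)) * Real.exp (-(‖x‖ ^ 2 / (2 * t)))
        = C * ((t⁻¹ * t ^ (-s) * t ^ (-(n : ℝ) / 2))
            * (Real.exp (-(y ^ 2 / (2 * t))) * Real.exp (-(‖x‖ ^ 2 / (2 * t))))) := by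
          rw [hC_def]; field_simp
      _ = C * (t ^ (-a - 1) * Real.exp (-(c / t))) := by rw [e3, e4]
  rw [hstep]
  -- final algebra
  have hy2s : (y ^ 2 / 2) ^ s = y ^ (2 * s) / 2 ^ s := by
    rw [Real.div_rpow (by positivity) (by norm_num), ← Real.rpow_natCast y 2,
      ← Real.rpow_mul hy.le]
    norm_num
  have h2pi : (2 * Real.pi) ^ (-(n : ℝ) / 2)
      = (2 : ℝ) ^ (-(n : ℝ) / 2) * Real.pi ^ (-(n : ℝ) / 2) := by
    rw [Real.mul_rpow (by norm_num) Real.pi_nonneg]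
  have hca : c ^ a = (‖x‖ ^ 2 + y ^ 2) ^ a / 2 ^ a := by
    rw [hc_def, Real.div_rpow (by positivity) (by norm_num)]
  have h2s : (2:ℝ) ^ s * (2:ℝ) ^ ((n:ℝ)/2) = 2 ^ a := by
    rw [← Real.rpow_add (by norm_num), ha_def, add_comm]
  have hpin : Real.pi ^ (-(n : ℝ) / 2) = (Real.pi ^ ((n : ℝ) / 2))⁻¹ := by
    rw [← Real.rpow_neg Real.pi_nonneg]; ring_nf
  have hΓ : Real.Gamma (s + (n:ℝ) / 2) = Real.Gamma a := by rw [ha_def, add_comm]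
  rw [hC_def, hy2s, h2pi, hca, hpin, hΓ]
  have h2a : (0:ℝ) < 2 ^ a := by positivity
  have h2ss : (0:ℝ) < (2:ℝ) ^ s := by positivity
  have h2n : (0:ℝ) < (2:ℝ) ^ ((n:ℝ)/2) := by positivity
  have hπn : (0:ℝ) < Real.pi ^ ((n:ℝ)/2) := by positivity
  have hba : (0:ℝ) < (‖x‖ ^ 2 + y ^ 2) ^ a := by positivity
  rw [show -(n:ℝ)/2 = -((n:ℝ)/2) by ring] at *
  field_simp
  have key2 : (2:ℝ) ^ (-(n:ℝ) / 2) * 2 ^ a = 2 ^ s := by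
    rw [← Real.rpow_add (by norm_num : (0:ℝ) < 2)]
    congr 1
    rw [ha_def]; ring
  rw [show -(n:ℝ)/2 = -((n:ℝ)/2) by ring] at key2
  linear_combination key2
end

section
/- Fix n ≥ 1, s ∈ (0,1) and y > 0. Then ∫_{ℝⁿ} K_y(x) dx = 1, i.e. the Poisson-type kernel K_y is a probability density on ℝⁿ. -/
open MeasureTheory Real
open Set

lemma gauss_int (n : ℕ) {t : ℝ} (ht : 0 < t) :
    Integrable (fun x : EuclideanSpace ℝ (Fin n) => rexp (-t * ‖x‖ ^ 2)) := by
  have h := (GaussianFourier.integrable_cexp_neg_mul_sq_norm_add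
    (show (0:ℝ) < ((t:ℂ)).re by simpa) 0 (0 : EuclideanSpace ℝ (Fin n))).re
  refine h.congr (Filter.Eventually.of_forall fun v => ?_)
  have : -(t:ℂ) * (‖v‖:ℂ) ^ 2 + 0 * (inner ℝ (0 : EuclideanSpace ℝ (Fin n)) v : ℝ)
      = ((-t * ‖v‖ ^ 2 : ℝ) : ℂ) := by push_cast; ring
  simp only [this, Complex.exp_ofReal_re, RCLike.re_to_complex]

lemma key_integral (n : ℕ) {s y : ℝ} (hs : 0 < s) (hy : 0 < y) :
    ∫ x : EuclideanSpace ℝ (Fin n), (‖x‖ ^ 2 + y ^ 2) ^ (-((n : ℝ) / 2 + s)) =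
      π ^ ((n : ℝ) / 2) * ((1 / y ^ 2) ^ s * Gamma s) / Gamma ((n : ℝ) / 2 + s) := by
  set E := EuclideanSpace ℝ (Fin n)
  set a : ℝ := (n : ℝ) / 2 + s with ha_def
  have ha : 0 < a := by positivity
  have hb : ∀ x : E, 0 < ‖x‖ ^ 2 + y ^ 2 := fun x => by positivity
  -- integrand on the product
  set f : E → ℝ → ℝ := fun x t => t ^ (a - 1) * rexp (-((‖x‖ ^ 2 + y ^ 2) * t)) with hf_def
  have hf_int : ∀ x : E, IntegrableOn (f x) (Ioi 0) := by
    intro x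
    have := integrableOn_rpow_mul_exp_neg_mul_rpow (p := 1) (s := a - 1)
      (b := ‖x‖ ^ 2 + y ^ 2) (by linarith) zero_lt_one (hb x)
    refine this.congr_fun (fun t ht => ?_) measurableSet_Ioi
    simp only [hf_def, Real.rpow_one, neg_mul]
  have hf_eval : ∀ x : E, ∫ t in Ioi 0, f x t = (1 / (‖x‖ ^ 2 + y ^ 2)) ^ a * Gamma a :=
    fun x => integral_rpow_mul_exp_neg_mul_Ioi ha (hb x)
  -- pointwise: (b x)^(-a) = Γ(a)⁻¹ * ∫ t, f x t
  have hpt : ∀ x : E, (‖x‖ ^ 2 + y ^ 2) ^ (-a) = (Gamma a)⁻¹ * ∫ t in Ioi 0, f x t := by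
    intro x
    rw [hf_eval x, one_div, Real.inv_rpow (hb x).le, Real.rpow_neg (hb x).le]
    field_simp [Real.Gamma_pos_of_pos ha |>.ne']
  -- measurability of the product integrand
  have hmeas : Measurable (Function.uncurry fun (x : E) (t : ℝ) => ENNReal.ofReal (f x t)) := by
    apply Measurable.ennreal_ofReal
    simp only [hf_def]
    fun_prop
  have hf_nonneg : ∀ x : E, 0 ≤ᵐ[volume.restrict (Ioi (0:ℝ))] f x := by
    intro x
    filter_upwards [ae_restrict_mem measurableSet_Ioi] with t ht
    have : (0:ℝ) < t := ht
    positivity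
  -- Step 1: rewrite as a lintegral
  have h1 : ∫ x : E, (‖x‖ ^ 2 + y ^ 2) ^ (-a)
      = (∫⁻ x : E, ENNReal.ofReal ((‖x‖ ^ 2 + y ^ 2) ^ (-a))).toReal := by
    apply integral_eq_lintegral_of_nonneg_ae
    · exact Filter.Eventually.of_forall fun x => Real.rpow_nonneg (hb x).le _
    · exact (Continuous.rpow_const (by continuity) fun x => Or.inl (hb x).ne').aestronglyMeasurable
  -- Step 2: pointwise lintegral identity
  have h2 : ∀ x : E, ENNReal.ofReal ((‖x‖ ^ 2 + y ^ 2) ^ (-a))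
      = ENNReal.ofReal (Gamma a)⁻¹ * ∫⁻ t in Ioi (0:ℝ), ENNReal.ofReal (f x t) := by
    intro x
    rw [hpt x, ENNReal.ofReal_mul (by positivity),
      ofReal_integral_eq_lintegral_ofReal (hf_int x) (hf_nonneg x)]
  -- Step 3: Tonelli
  have h3 : ∫⁻ x : E, ∫⁻ t in Ioi (0:ℝ), ENNReal.ofReal (f x t)
      = ∫⁻ t in Ioi (0:ℝ), ∫⁻ x : E, ENNReal.ofReal (f x t) :=
    lintegral_lintegral_swap hmeas.aemeasurable
  -- Step 4: inner x-integral for fixed t > 0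
  have h4 : ∀ t : ℝ, t ∈ Ioi (0:ℝ) → ∫⁻ x : E, ENNReal.ofReal (f x t)
      = ENNReal.ofReal (π ^ ((n : ℝ) / 2) * (t ^ (s - 1) * rexp (-(y ^ 2 * t)))) := by
    intro t ht
    have ht' : (0:ℝ) < t := ht
    have hsplit : ∀ x : E, f x t
        = (t ^ (a - 1) * rexp (-(y ^ 2 * t))) * rexp (-t * ‖x‖ ^ 2) := by
      intro x
      simp only [hf_def]
      rw [mul_assoc, ← Real.exp_add]
      congr 2
      ring
    calc ∫⁻ x : E, ENNReal.ofReal (f x t)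
        = ∫⁻ x : E, ENNReal.ofReal (t ^ (a - 1) * rexp (-(y ^ 2 * t)))
            * ENNReal.ofReal (rexp (-t * ‖x‖ ^ 2)) := by
          simp_rw [hsplit, ENNReal.ofReal_mul (by positivity : (0:ℝ) ≤ t ^ (a - 1) * rexp (-(y ^ 2 * t)))]
      _ = ENNReal.ofReal (t ^ (a - 1) * rexp (-(y ^ 2 * t)))
            * ENNReal.ofReal (∫ x : E, rexp (-t * ‖x‖ ^ 2)) := by
          rw [lintegral_const_mul _ (by fun_prop),
            ofReal_integral_eq_lintegral_ofReal (gauss_int n ht')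
              (Filter.Eventually.of_forall fun x => (Real.exp_pos _).le)]
      _ = ENNReal.ofReal (π ^ ((n : ℝ) / 2) * (t ^ (s - 1) * rexp (-(y ^ 2 * t)))) := by
          rw [GaussianFourier.integral_rexp_neg_mul_sq_norm ht',
            ← ENNReal.ofReal_mul (by positivity)]
          congr 1
          have hfr : (Module.finrank ℝ E : ℝ) = (n : ℝ) := by simp [E]
          rw [hfr, Real.div_rpow Real.pi_pos.le ht'.le]
          have hts : t ^ (a - 1) / t ^ ((n : ℝ) / 2) = t ^ (s - 1) := by
            rw [← Real.rpow_sub ht']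
            congr 1
            rw [ha_def]; ring
          rw [← hts]; ring
  -- Step 5: the outer t-integral
  have hint5 : IntegrableOn (fun t : ℝ => t ^ (s - 1) * rexp (-(y ^ 2 * t))) (Ioi 0) := by
    have := integrableOn_rpow_mul_exp_neg_mul_rpow (p := 1) (s := s - 1)
      (b := y ^ 2) (by linarith) zero_lt_one (by positivity)
    refine this.congr_fun (fun t ht => ?_) measurableSet_Ioi
    simp only [Real.rpow_one, neg_mul]
  have h5 : ∫⁻ t in Ioi (0:ℝ),
        ENNReal.ofReal (π ^ ((n : ℝ) / 2) * (t ^ (s - 1) * rexp (-(y ^ 2 * t))))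
      = ENNReal.ofReal (π ^ ((n : ℝ) / 2) * ((1 / y ^ 2) ^ s * Gamma s)) := by
    rw [← ofReal_integral_eq_lintegral_ofReal (hint5.const_mul _) ?nonneg]
    · rw [MeasureTheory.integral_const_mul,
        integral_rpow_mul_exp_neg_mul_Ioi hs (by positivity : (0:ℝ) < y ^ 2)]
    case nonneg =>
      filter_upwards [ae_restrict_mem measurableSet_Ioi] with t ht
      have : (0:ℝ) < t := ht
      positivity
  -- assemble
  calc ∫ x : E, (‖x‖ ^ 2 + y ^ 2) ^ (-a)
      = (∫⁻ x : E, ENNReal.ofReal (Gamma a)⁻¹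
          * ∫⁻ t in Ioi (0:ℝ), ENNReal.ofReal (f x t)).toReal := by
        rw [h1]; simp_rw [h2]
    _ = (ENNReal.ofReal (Gamma a)⁻¹
          * ∫⁻ t in Ioi (0:ℝ), ∫⁻ x : E, ENNReal.ofReal (f x t)).toReal := by
        rw [lintegral_const_mul' _ _ ENNReal.ofReal_ne_top, h3]
    _ = (ENNReal.ofReal (Gamma a)⁻¹
          * ENNReal.ofReal (π ^ ((n : ℝ) / 2) * ((1 / y ^ 2) ^ s * Gamma s))).toReal := by
        rw [setLIntegral_congr_fun measurableSet_Ioi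
          h4, h5]
    _ = π ^ ((n : ℝ) / 2) * ((1 / y ^ 2) ^ s * Gamma s) / Gamma a := by
        rw [ENNReal.toReal_mul, ENNReal.toReal_ofReal (by positivity),
          ENNReal.toReal_ofReal (by positivity), inv_mul_eq_div]

/-- The Poisson-type kernel `K_y(x) = C_{n,s} · y^{2s} / (|x|² + y²)^{n/2+s}`, where
`C_{n,s} = Γ(s + n/2) / (π^{n/2} Γ(s))`. -/
noncomputable def poissonKernel' (n : ℕ) (s : ℝ) (y : ℝ) (x : EuclideanSpace ℝ (Fin n)) : ℝ :=
  (Real.Gamma (s + n / 2) / (Real.pi ^ ((n : ℝ) / 2) * Real.Gamma s))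
    * y ^ (2 * s) / (‖x‖ ^ 2 + y ^ 2) ^ ((n : ℝ) / 2 + s)

/-- For `n ≥ 1`, `s ∈ (0,1)` and `y > 0`, the Poisson-type kernel `K_y`
is a probability density on `ℝⁿ`: `∫_{ℝⁿ} K_y(x) dx = 1`. -/
theorem integral_poissonKernel_eq_one
    (n : ℕ) (hn : 1 ≤ n) (s : ℝ) (hs : s ∈ Set.Ioo (0 : ℝ) 1) (y : ℝ) (hy : 0 < y) :
    ∫ x : EuclideanSpace ℝ (Fin n), poissonKernel' n s y x = 1 := by
  simp only [poissonKernel']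
  obtain ⟨hs0, -⟩ := hs
  have hb : ∀ x : EuclideanSpace ℝ (Fin n), (0:ℝ) < ‖x‖ ^ 2 + y ^ 2 := fun x => by positivity
  have hrw : ∀ x : EuclideanSpace ℝ (Fin n),
      (Real.Gamma (s + n / 2) / (Real.pi ^ ((n : ℝ) / 2) * Real.Gamma s))
          * y ^ (2 * s) / (‖x‖ ^ 2 + y ^ 2) ^ ((n : ℝ) / 2 + s)
        = (Real.Gamma (s + n / 2) / (Real.pi ^ ((n : ℝ) / 2) * Real.Gamma s) * y ^ (2 * s))
          * (‖x‖ ^ 2 + y ^ 2) ^ (-((n : ℝ) / 2 + s)) := by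
    intro x
    rw [Real.rpow_neg (hb x).le, div_eq_mul_inv]
  simp_rw [hrw]
  rw [MeasureTheory.integral_const_mul, key_integral n hs0 hy]
  have hy2 : y ^ (2 * s) * (1 / y ^ 2) ^ s = 1 := by
    rw [show y ^ (2 * s) = (y ^ 2) ^ s by
        rw [← Real.rpow_natCast y 2, ← Real.rpow_mul hy.le]; norm_num,
      ← Real.mul_rpow (by positivity) (by positivity), mul_one_div_cancel (by positivity),
      Real.one_rpow]
  have hΓs : Real.Gamma s ≠ 0 := (Real.Gamma_pos_of_pos hs0).ne'
  have hΓa : Real.Gamma ((n:ℝ)/2 + s) ≠ 0 :=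
    (Real.Gamma_pos_of_pos (by positivity)).ne'
  have hπ : Real.pi ^ ((n:ℝ)/2) ≠ 0 := by positivity
  rw [show s + (n:ℝ)/2 = (n:ℝ)/2 + s from add_comm _ _]
  set G : ℝ := Real.Gamma ((n:ℝ)/2 + s) with hG
  field_simp
  linear_combination hy2
end
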